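/- If S is any ρ-structure (possibly without a full satisfaction relation) and σ is a logically valid ρ-sentence (⊢ σ), then S ⊨* σ, i.e., every {σ}-satisfaction relation for S satisfies σ. -/

import Mathlib

open FirstOrder FirstOrder.Language

namespace PaperSat

variable {L : Language} {α : Type*}

/-- A formula in context: a bounded formula together with its number of bound variables. -/
abbrev Fml (L : Language) (α : Type*) : Type _ := Σ n, L.BoundedFormula α n

/-- `Sub φ ψ` means that `φ` is a subformula (or subexpression) of `ψ`. -/
inductive Sub {L : Language} {α : Type*} : Fml L α → Fml L α → Prop
  | refl (φ : Fml L α) : Sub φ φ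
  | impLeft {φ : Fml L α} {n : ℕ} (f g : L.BoundedFormula α n) :
      Sub φ ⟨n, f⟩ → Sub φ ⟨n, f.imp g⟩
  | impRight {φ : Fml L α} {n : ℕ} (f g : L.BoundedFormula α n) :
      Sub φ ⟨n, g⟩ → Sub φ ⟨n, f.imp g⟩
  | allOf {φ : Fml L α} {n : ℕ} (f : L.BoundedFormula α (n + 1)) :
      Sub φ ⟨n + 1, f⟩ → Sub φ ⟨n, f.all⟩

/-- Membership in the subformula closure of a class `Φ` of formulas. -/
def InCl (Φ : Set (Fml L α)) (φ : Fml L α) : Prop := ∃ ψ ∈ Φ, Sub φ ψ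

variable (M : Type*) [L.Structure M]

/-- `IsSatRel M Φ T` says that `T` is a `Φ`-satisfaction relation for the structure `M`:
a relation on pairs consisting of a subformula of a member of `Φ` and an assignment,
satisfying the usual Tarskian recursion clauses. -/
def IsSatRel (Φ : Set (Fml L α))
    (T : ∀ n, L.BoundedFormula α n → (α → M) → (Fin n → M) → Prop) : Prop :=
  (∀ (n : ℕ) (v : α → M) (xs : Fin n → M), InCl Φ ⟨n, BoundedFormula.falsum⟩ →
      ¬ T n BoundedFormula.falsum v xs) ∧
  (∀ (n : ℕ) (t₁ t₂ : L.Term (α ⊕ Fin n)) (v : α → M) (xs : Fin n → M),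
      InCl Φ ⟨n, t₁.bdEqual t₂⟩ →
      (T n (t₁.bdEqual t₂) v xs ↔ t₁.realize (Sum.elim v xs) = t₂.realize (Sum.elim v xs))) ∧
  (∀ (n l : ℕ) (R : L.Relations l) (ts : Fin l → L.Term (α ⊕ Fin n)) (v : α → M)
      (xs : Fin n → M), InCl Φ ⟨n, BoundedFormula.rel R ts⟩ →
      (T n (BoundedFormula.rel R ts) v xs ↔
        Structure.RelMap R fun i => (ts i).realize (Sum.elim v xs))) ∧
  (∀ (n : ℕ) (f g : L.BoundedFormula α n) (v : α → M) (xs : Fin n → M),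
      InCl Φ ⟨n, f.imp g⟩ → (T n (f.imp g) v xs ↔ (T n f v xs → T n g v xs))) ∧
  (∀ (n : ℕ) (f : L.BoundedFormula α (n + 1)) (v : α → M) (xs : Fin n → M),
      InCl Φ ⟨n, f.all⟩ → (T n f.all v xs ↔ ∀ x : M, T (n + 1) f v (Fin.snoc xs x)))

end PaperSat

namespace PaperLK

open FirstOrder FirstOrder.Language

variable {L : Language}

/-- Instantiation of the bound variable of a formula with one extra bound variable
by a term with free variables in `ℕ`. -/
def inst1 (f : L.BoundedFormula ℕ 1) (t : L.Term ℕ) : L.Formula ℕ :=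
  f.toFormula.subst (Sum.elim Term.var fun _ => t)

/-- The equality formula between two terms, as a formula with free variables in `ℕ`. -/
def eqT (t u : L.Term ℕ) : L.Formula ℕ :=
  (t.relabel Sum.inl).bdEqual (u.relabel Sum.inl)

/-- Gentzen's sequent calculus `LK` for classical first-order logic, on sequents of formulas
with free variables in `ℕ`.  The boolean parameter `cut` controls whether the cut rule is
available (`LK false eq` is the cut-free calculus `LK⁻`), and the boolean parameter `eq`
controls whether the rules for the identity predicate are available (`eq = false` gives logic
without identity). -/
inductive LK (cut eq : Bool) : List (L.Formula ℕ) → List (L.Formula ℕ) → Prop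
  | ax (φ : L.Formula ℕ) : LK cut eq [φ] [φ]
  | falsumL : LK cut eq [⊥] []
  | wL {Γ Δ} (φ) : LK cut eq Γ Δ → LK cut eq (φ :: Γ) Δ
  | wR {Γ Δ} (φ) : LK cut eq Γ Δ → LK cut eq Γ (Δ ++ [φ])
  | cL {Γ Δ} {φ} : LK cut eq (φ :: φ :: Γ) Δ → LK cut eq (φ :: Γ) Δ
  | cR {Γ Δ} {φ} : LK cut eq Γ (Δ ++ [φ, φ]) → LK cut eq Γ (Δ ++ [φ])
  | eL {Γ₁ Γ₂ Δ} {φ ψ} : LK cut eq (Γ₁ ++ φ :: ψ :: Γ₂) Δ → LK cut eq (Γ₁ ++ ψ :: φ :: Γ₂) Δ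
  | eR {Γ Δ₁ Δ₂} {φ ψ} : LK cut eq Γ (Δ₁ ++ φ :: ψ :: Δ₂) → LK cut eq Γ (Δ₁ ++ ψ :: φ :: Δ₂)
  | impL {Γ Γ' Δ Δ'} {f g : L.Formula ℕ} :
      LK cut eq Γ (Δ ++ [f]) → LK cut eq (g :: Γ') Δ' →
      LK cut eq ((f.imp g) :: (Γ ++ Γ')) (Δ ++ Δ')
  | impR {Γ Δ} {f g : L.Formula ℕ} :
      LK cut eq (f :: Γ) (Δ ++ [g]) → LK cut eq Γ (Δ ++ [f.imp g])
  | allL {Γ Δ} {f : L.BoundedFormula ℕ 1} (t : L.Term ℕ) :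
      LK cut eq ((inst1 f t) :: Γ) Δ → LK cut eq ((BoundedFormula.all f) :: Γ) Δ
  | allR {Γ Δ} {f : L.BoundedFormula ℕ 1} (k : ℕ)
      (hfresh : ∀ ψ ∈ (BoundedFormula.all f) :: (Γ ++ Δ), k ∉ ψ.freeVarFinset) :
      LK cut eq Γ (Δ ++ [inst1 f (Term.var k)]) →
      LK cut eq Γ (Δ ++ [BoundedFormula.all f])
  | cut' {Γ Γ' Δ Δ'} {φ : L.Formula ℕ} (hc : cut = true) :
      LK cut eq Γ (Δ ++ [φ]) → LK cut eq (φ :: Γ') Δ' → LK cut eq (Γ ++ Γ') (Δ ++ Δ')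
  | eqRefl (he : eq = true) (t : L.Term ℕ) : LK cut eq [] [eqT t t]
  | eqSubst {Γ Δ} {f : L.BoundedFormula ℕ 1} (he : eq = true) (t u : L.Term ℕ) :
      LK cut eq Γ (Δ ++ [inst1 f t]) → LK cut eq ((eqT t u) :: Γ) (Δ ++ [inst1 f u])

/-- Provability of a formula from a theory (a class of formulas), via the full sequent
calculus (with cut and with the rules for identity). -/
def ThmOf (Θ : Set (L.Formula ℕ)) (σ : L.Formula ℕ) : Prop :=
  ∃ Γ : List (L.Formula ℕ), (∀ γ ∈ Γ, γ ∈ Θ) ∧ LK true true Γ [σ]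

/-- A formula is a sentence if it has no free variables. -/
def ClosedF (φ : L.Formula ℕ) : Prop := φ.freeVarFinset = ∅

/-- A theory is consistent if there is no sentence such that both it and its negation
are provable. -/
def ConsistentT (Θ : Set (L.Formula ℕ)) : Prop :=
  ¬ ∃ σ : L.Formula ℕ, ClosedF σ ∧ ThmOf Θ σ ∧ ThmOf Θ σ.not

/-- The class of formulas not containing the identity predicate. -/
inductive EqFree : ∀ {n : ℕ}, L.BoundedFormula ℕ n → Prop
  | falsum {n} : EqFree (n := n) BoundedFormula.falsum
  | rel {n l} (R : L.Relations l) (ts : Fin l → L.Term (ℕ ⊕ Fin n)) :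
      EqFree (BoundedFormula.rel R ts)
  | imp {n} {f g : L.BoundedFormula ℕ n} : EqFree f → EqFree g → EqFree (f.imp g)
  | all {n} {f : L.BoundedFormula ℕ (n + 1)} : EqFree f → EqFree (BoundedFormula.all f)

end PaperLK

namespace PaperSat

open FirstOrder FirstOrder.Language PaperLK

variable {L : Language}

/-- The universal satisfaction predicate `M ⊨* φ` for a structure `M` (possibly a proper
class) and a formula `φ`: every `{φ}`-satisfaction relation for `M` satisfies `φ` (at every
assignment of its variables). -/
def ModelsStarF (M : Type*) [L.Structure M] (φ : L.Formula ℕ) : Prop :=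
  ∀ T, IsSatRel M {(⟨0, φ⟩ : Fml L ℕ)} T → ∀ (v : ℕ → M) (xs : Fin 0 → M), T 0 φ v xs

/-- `M ⊨* Θ` for a theory `Θ`: `M ⊨* φ` for every member `φ` of `Θ`. -/
def ModelsStarT (M : Type*) [L.Structure M] (Θ : Set (L.Formula ℕ)) : Prop :=
  ∀ φ ∈ Θ, ModelsStarF M φ

/-- A structure is weakly satisfactory if for every formula `φ` there exists a
`{φ}`-satisfaction relation for it. -/
def WeaklySatisfactory (M : Type*) [L.Structure M] : Prop :=
  ∀ φ : Fml L ℕ, ∃ T, IsSatRel M {φ} T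

end PaperSat

namespace PaperSat

open PaperLK

section Helpers

variable {L : Language} {α : Type*} {M : Type*} [L.Structure M]

theorem sub_trans {a b c : Fml L α} (hab : Sub a b) (hbc : Sub b c) : Sub a c := by
  induction hbc with
  | refl => exact hab
  | impLeft f g _ ih => exact Sub.impLeft f g ih
  | impRight f g _ ih => exact Sub.impRight f g ih
  | allOf f _ ih => exact Sub.allOf f ih

theorem inCl_sub {Φ : Set (Fml L α)} {a b : Fml L α} (h : InCl Φ b) (hab : Sub a b) :
    InCl Φ a :=
  let ⟨ψ, hψ, hs⟩ := h; ⟨ψ, hψ, sub_trans hab hs⟩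

/-- Any `Φ`-satisfaction relation agrees with `Realize` on the subformula closure of `Φ`. -/
theorem satRel_agree {Φ : Set (Fml L ℕ)}
    {T : ∀ n, L.BoundedFormula ℕ n → (ℕ → M) → (Fin n → M) → Prop}
    (hT : IsSatRel M Φ T) :
    ∀ {n} (f : L.BoundedFormula ℕ n), InCl Φ ⟨n, f⟩ →
      ∀ (v : ℕ → M) (xs : Fin n → M), T n f v xs ↔ f.Realize v xs := by
  obtain ⟨hbot, heq, hrel, himp, hall⟩ := hT
  intro n f
  induction f with
  | falsum =>
    intro h v xs
    exact iff_of_false (hbot _ v xs h) (by simp [BoundedFormula.Realize])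
  | equal t₁ t₂ =>
    intro h v xs
    exact (heq _ t₁ t₂ v xs h).trans (by simp [Term.bdEqual, BoundedFormula.Realize])
  | rel R ts =>
    intro h v xs
    exact (hrel _ _ R ts v xs h).trans (by simp [BoundedFormula.Realize])
  | imp f g ihf ihg =>
    intro h v xs
    rw [himp _ f g v xs h, BoundedFormula.realize_imp,
      ihf (inCl_sub h (Sub.impLeft f g (Sub.refl _))) v xs,
      ihg (inCl_sub h (Sub.impRight f g (Sub.refl _))) v xs]
  | all f ihf =>
    intro h v xs
    rw [hall _ f v xs h, BoundedFormula.realize_all]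
    exact forall_congr' fun x => ihf (inCl_sub h (Sub.allOf f (Sub.refl _))) v _

/-- Realization only depends on the values of the free variables. -/
theorem realize_congr_freeVar {n : ℕ} (φ : L.BoundedFormula ℕ n) {v w : ℕ → M}
    {xs : Fin n → M} (h : ∀ a ∈ φ.freeVarFinset, v a = w a) :
    φ.Realize v xs ↔ φ.Realize w xs := by
  have hvw : (v ∘ (Subtype.val : ((φ.freeVarFinset : Set ℕ) : Type) → ℕ)) =
      w ∘ Subtype.val :=
    funext fun a => h a (Finset.mem_coe.mp a.2)
  rw [← BoundedFormula.realize_restrictFreeVar' (φ := φ) (s := (φ.freeVarFinset : Set ℕ))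
      subset_rfl (v := v) (xs := xs),
    ← BoundedFormula.realize_restrictFreeVar' (φ := φ) (s := (φ.freeVarFinset : Set ℕ))
      subset_rfl (v := w) (xs := xs), hvw]

theorem realize_inst1 (f : L.BoundedFormula ℕ 1) (t : L.Term ℕ) (v : ℕ → M) :
    (inst1 f t).Realize v ↔ f.Realize v (fun _ => t.realize v) := by
  rw [inst1, Formula.Realize, BoundedFormula.realize_subst, ← Formula.Realize,
    BoundedFormula.realize_toFormula]
  exact Iff.rfl

theorem realize_eqT (t u : L.Term ℕ) (v : ℕ → M) :
    (eqT t u).Realize v ↔ t.realize v = u.realize v := by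
  rw [eqT, Formula.Realize, BoundedFormula.realize_bdEqual]
  simp [Term.realize_relabel]

theorem fn_eq_snoc (x : M) : (fun _ : Fin 1 => x) = Fin.snoc (default : Fin 0 → M) x := by
  funext i
  fin_cases i
  simp [Fin.snoc]

/-- Soundness of the sequent calculus `LK`. -/
theorem LK_sound {cut eq : Bool} {Γ Δ : List (L.Formula ℕ)}
    (h : LK cut eq Γ Δ) [Nonempty M] :
    ∀ v : ℕ → M, (∀ γ ∈ Γ, Formula.Realize γ v) → ∃ δ ∈ Δ, Formula.Realize δ v := by
  induction h with
  | ax φ => exact fun v hΓ => ⟨φ, List.mem_singleton_self φ, hΓ φ (List.mem_singleton_self φ)⟩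
  | falsumL =>
    intro v hΓ
    exact absurd (hΓ ⊥ (List.mem_singleton_self _)) (by simp [Formula.Realize])
  | wL φ _ ih => exact fun v hΓ => ih v fun γ hγ => hΓ γ (List.mem_cons_of_mem φ hγ)
  | wR φ _ ih =>
    intro v hΓ
    obtain ⟨δ, hδ, hr⟩ := ih v hΓ
    exact ⟨δ, List.mem_append_left _ hδ, hr⟩
  | cL _ ih =>
    intro v hΓ
    refine ih v fun γ hγ => hΓ γ ?_
    simp only [List.mem_cons] at hγ ⊢
    tauto
  | cR _ ih =>
    intro v hΓ
    obtain ⟨δ, hδ, hr⟩ := ih v hΓ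
    refine ⟨δ, ?_, hr⟩
    simp only [List.mem_append, List.mem_cons, List.mem_singleton] at hδ ⊢
    tauto
  | eL _ ih =>
    intro v hΓ
    refine ih v fun γ hγ => hΓ γ ?_
    simp only [List.mem_append, List.mem_cons] at hγ ⊢
    tauto
  | eR _ ih =>
    intro v hΓ
    obtain ⟨δ, hδ, hr⟩ := ih v hΓ
    refine ⟨δ, ?_, hr⟩
    simp only [List.mem_append, List.mem_cons] at hδ ⊢
    tauto
  | impL h1 h2 ih1 ih2 =>
    rename_i Γ Γ' Δ Δ' f g
    intro v hΓ
    have himp := hΓ _ (List.mem_cons_self)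
    obtain ⟨δ, hδ, hr⟩ := ih1 v fun γ hγ =>
      hΓ γ (List.mem_cons_of_mem _ (List.mem_append_left _ hγ))
    rcases List.mem_append.mp hδ with hδ | hδ
    · exact ⟨δ, List.mem_append_left _ hδ, hr⟩
    · rw [List.mem_singleton] at hδ; subst hδ
      have hg : Formula.Realize g v := himp hr
      have hΓ'' : ∀ γ ∈ g :: Γ', Formula.Realize γ v := by
        intro γ hγ
        rcases List.mem_cons.mp hγ with hγ | hγ
        · subst hγ; exact hg
        · exact hΓ γ (List.mem_cons_of_mem _ (List.mem_append_right _ hγ))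
      obtain ⟨δ', hδ', hr'⟩ := ih2 v hΓ''
      exact ⟨δ', List.mem_append_right _ hδ', hr'⟩
  | impR h1 ih =>
    rename_i Γ Δ f g
    intro v hΓ
    by_cases hf : Formula.Realize f v
    · have hΓ'' : ∀ γ ∈ f :: Γ, Formula.Realize γ v := by
        intro γ hγ
        rcases List.mem_cons.mp hγ with hγ | hγ
        · subst hγ; exact hf
        · exact hΓ γ hγ
      obtain ⟨δ, hδ, hr⟩ := ih v hΓ''
      rcases List.mem_append.mp hδ with hδ | hδ
      · exact ⟨δ, List.mem_append_left _ hδ, hr⟩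
      · rw [List.mem_singleton] at hδ
        exact ⟨f.imp g, List.mem_append_right _ (List.mem_singleton_self _),
          fun _ => hδ ▸ hr⟩
    · exact ⟨f.imp g, List.mem_append_right _ (List.mem_singleton_self _),
        fun hf' => absurd hf' hf⟩
  | allL t h1 ih =>
    rename_i Γ Δ f
    intro v hΓ
    have hallf := hΓ _ (List.mem_cons_self)
    rw [Formula.Realize, BoundedFormula.realize_all] at hallf
    refine ih v fun γ hγ => ?_
    rcases List.mem_cons.mp hγ with hγ | hγ
    · subst hγ
      rw [realize_inst1, fn_eq_snoc]
      exact hallf (t.realize v)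
    · exact hΓ γ (List.mem_cons_of_mem _ hγ)
  | allR k hfresh h1 ih =>
    rename_i Γ Δ f
    intro v hΓ
    by_cases hΔ : ∃ δ ∈ Δ, Formula.Realize δ v
    · obtain ⟨δ, hδ, hr⟩ := hΔ
      exact ⟨δ, List.mem_append_left _ hδ, hr⟩
    · refine ⟨BoundedFormula.all f,
        List.mem_append_right _ (List.mem_singleton_self _), ?_⟩
      rw [Formula.Realize, BoundedFormula.realize_all]
      intro x
      set v' := Function.update v k x with hv'
      have hvv' : ∀ a, a ≠ k → v' a = v a := fun a ha => Function.update_of_ne ha _ _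
      have hΓ' : ∀ γ ∈ Γ, Formula.Realize γ v' := by
        intro γ hγ
        rw [Formula.Realize, realize_congr_freeVar γ (w := v)
          (fun a ha => hvv' a fun he => hfresh γ
            (List.mem_cons_of_mem _ (List.mem_append_left _ hγ)) (he ▸ ha))]
        exact hΓ γ hγ
      obtain ⟨δ, hδ, hr⟩ := ih v' hΓ'
      rcases List.mem_append.mp hδ with hδ | hδ
      · exact absurd ⟨δ, hδ, (realize_congr_freeVar δ (v := v) (w := v')
          (fun a ha => (hvv' a fun he => hfresh δ
            (List.mem_cons_of_mem _ (List.mem_append_right _ hδ)) (he ▸ ha)).symm)).mpr hr⟩ hΔ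
      · rw [List.mem_singleton] at hδ; subst hδ
        rw [realize_inst1] at hr
        have hk : v' k = x := Function.update_self k x v
        simp only [Term.realize_var, hk] at hr
        have hfree : ∀ a ∈ f.freeVarFinset, v a = v' a := by
          intro a ha
          refine (hvv' a fun he => hfresh (BoundedFormula.all f)
            (List.mem_cons_self) ?_).symm
          have : (BoundedFormula.all f).freeVarFinset = f.freeVarFinset := rfl
          rw [this]
          exact he ▸ ha
        rw [realize_congr_freeVar f hfree]
        rw [fn_eq_snoc x] at hr
        exact hr
  | cut' hc h1 h2 ih1 ih2 =>
    rename_i Γ Γ' Δ Δ' φ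
    intro v hΓ
    obtain ⟨δ, hδ, hr⟩ := ih1 v fun γ hγ => hΓ γ (List.mem_append_left _ hγ)
    rcases List.mem_append.mp hδ with hδ | hδ
    · exact ⟨δ, List.mem_append_left _ hδ, hr⟩
    · rw [List.mem_singleton] at hδ
      have hrφ : Formula.Realize φ v := hδ ▸ hr
      have hΓ'' : ∀ γ ∈ φ :: Γ', Formula.Realize γ v := by
        intro γ hγ
        rcases List.mem_cons.mp hγ with hγ | hγ
        · subst hγ; exact hrφ
        · exact hΓ γ (List.mem_append_right _ hγ)
      obtain ⟨δ', hδ', hr'⟩ := ih2 v hΓ''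
      exact ⟨δ', List.mem_append_right _ hδ', hr'⟩
  | eqRefl he t =>
    intro v _
    exact ⟨_, List.mem_singleton_self _, (realize_eqT t t v).mpr rfl⟩
  | eqSubst he t u h1 ih =>
    rename_i Γ Δ f
    intro v hΓ
    have heq := (realize_eqT t u v).mp (hΓ _ (List.mem_cons_self))
    obtain ⟨δ, hδ, hr⟩ := ih v fun γ hγ => hΓ γ (List.mem_cons_of_mem _ hγ)
    rcases List.mem_append.mp hδ with hδ | hδ
    · exact ⟨δ, List.mem_append_left _ hδ, hr⟩
    · rw [List.mem_singleton] at hδ; subst hδ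
      refine ⟨inst1 f u, List.mem_append_right _ (List.mem_singleton_self _), ?_⟩
      rw [realize_inst1] at hr ⊢
      rw [← heq]
      exact hr

end Helpers

/-- If `M` is any structure (possibly without a full satisfaction relation)
and `σ` is a logically valid sentence (`⊢ σ`), then `M ⊨* σ`: every `{σ}`-satisfaction
relation for `M` satisfies `σ`. -/
theorem modelsStar_of_valid {L : Language} (M : Type*) [L.Structure M] [Nonempty M]
    (σ : L.Formula ℕ) (hσc : ClosedF σ) (hval : ThmOf (∅ : Set (L.Formula ℕ)) σ) :
    ModelsStarF M σ := by
  obtain ⟨Γ, hΓe, hLK⟩ := hval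
  intro T hT v xs
  obtain ⟨δ, hδ, hr⟩ := LK_sound (M := M) hLK v
    (fun γ hγ => absurd (hΓe γ hγ) (Set.notMem_empty γ))
  rw [List.mem_singleton] at hδ
  have hrσ : Formula.Realize σ v := hδ ▸ hr
  refine (satRel_agree hT σ ⟨⟨0, σ⟩, Set.mem_singleton _, Sub.refl _⟩ v xs).mpr ?_
  rw [Subsingleton.elim xs (default : Fin 0 → M)]
  exact hrσ

end PaperSat
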